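/- Let G = D − VVᵀ be positive definite with D diagonal and V an n×k matrix, and let a* ∈ ℤⁿ \ {0} minimize aᵀGa. Suppose a* has at least two nonzero coordinates. Then for every j: (a*_j + 1/2)·D_{jj} > (VVᵀa*)_j and (a*_j − 1/2)·D_{jj} < (VVᵀa*)_j. -/

import Mathlib

open Matrix BigOperators

theorem stmt12 {n k : ℕ} (D : Matrix (Fin n) (Fin n) ℝ) (hD : D.IsDiag)
    (V : Matrix (Fin n) (Fin k) ℝ) (hG : (D - V * Vᵀ).PosDef)
    (a : Fin n → ℤ) (ha : a ≠ 0)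
    (hmin : ∀ b : Fin n → ℤ, b ≠ 0 →
      (fun i => (a i : ℝ)) ⬝ᵥ (D - V * Vᵀ).mulVec (fun i => (a i : ℝ)) ≤
      (fun i => (b i : ℝ)) ⬝ᵥ (D - V * Vᵀ).mulVec (fun i => (b i : ℝ)))
    (htwo : ∃ i j, i ≠ j ∧ a i ≠ 0 ∧ a j ≠ 0) :
    ∀ j, ((a j : ℝ) + 1 / 2) * D j j >
        (V * Vᵀ).mulVec (fun l => (a l : ℝ)) j ∧
      ((a j : ℝ) - 1 / 2) * D j j <
        (V * Vᵀ).mulVec (fun l => (a l : ℝ)) j := by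
  intro j
  set av : Fin n → ℝ := fun i => (a i : ℝ) with hav
  set W : Matrix (Fin n) (Fin n) ℝ := V * Vᵀ with hWdef
  set G : Matrix (Fin n) (Fin n) ℝ := D - W with hGdef
  -- symmetry of G
  have hDsymm : Dᵀ = D := by
    ext i j'
    by_cases h : i = j'
    · subst h; simp
    · simp [transpose_apply, hD h, hD (Ne.symm h)]
  have hGsymm : Gᵀ = G := by
    rw [hGdef, transpose_sub, hDsymm, hWdef, transpose_mul, transpose_transpose]
  have hsymm : ∀ x y : Fin n → ℝ, x ⬝ᵥ G.mulVec y = y ⬝ᵥ G.mulVec x := by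
    intro x y
    rw [Matrix.dotProduct_mulVec, ← Matrix.vecMul_transpose, hGsymm,
      dotProduct_comm]
  set c : ℝ := (G.mulVec av) j with hcdef
  -- expansion of quadratic form
  have hexp : ∀ t : ℝ, (av + Pi.single j t) ⬝ᵥ G.mulVec (av + Pi.single j t)
      = av ⬝ᵥ G.mulVec av + 2 * t * c + t * t * G j j := by
    intro t
    rw [mulVec_add, dotProduct_add, add_dotProduct, add_dotProduct]
    rw [hsymm av (Pi.single j t)]
    rw [single_dotProduct, single_dotProduct, mulVec_single]
    simp only [Pi.smul_apply, op_smul_eq_smul, smul_eq_mul, Matrix.col_apply]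
    ring
  -- the key inequality from minimality
  have key : ∀ t : ℤ, 0 ≤ 2 * (t : ℝ) * c + (t : ℝ) * (t : ℝ) * G j j := by
    intro t
    obtain ⟨i₁, i₂, h12, ha1, ha2⟩ := htwo
    obtain ⟨i, hij, hi⟩ : ∃ i, i ≠ j ∧ a i ≠ 0 := by
      rcases ne_or_eq i₁ j with h | h
      · exact ⟨i₁, h, ha1⟩
      · exact ⟨i₂, by rw [← h]; exact h12.symm, ha2⟩
    set b : Fin n → ℤ := a + Pi.single j t with hb
    have hbne : b ≠ 0 := by
      intro h
      apply hi
      have := congrFun h i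
      simpa [hb, Pi.single_apply, hij] using this
    have hcast : (fun i' => ((b i' : ℤ) : ℝ)) = av + Pi.single j (t : ℝ) := by
      funext i'
      simp only [hb, Pi.add_apply, Pi.single_apply, hav]
      push_cast
      by_cases h : i' = j <;> simp [h]
    have := hmin b hbne
    rw [hcast, hexp (t : ℝ)] at this
    linarith
  -- compute c
  have hDav : (D.mulVec av) j = D j j * (a j : ℝ) := by
    rw [mulVec, dotProduct]
    exact Finset.sum_eq_single_of_mem j (Finset.mem_univ j)
      (fun i _ h => by rw [hD (Ne.symm h), zero_mul])
  have hc : c = D j j * (a j : ℝ) - (W.mulVec av) j := by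
    rw [hcdef, hGdef, sub_mulVec, Pi.sub_apply, hDav]
  have hGjj : G j j = D j j - W j j := by rw [hGdef, Matrix.sub_apply]
  have hWjjeq : W j j = ∑ l, V j l * V j l := by
    rw [hWdef, mul_apply]
    simp [transpose_apply]
  have hWjj : 0 ≤ W j j := by
    rw [hWjjeq]
    exact Finset.sum_nonneg fun l _ => mul_self_nonneg _
  have hg : 0 < G j j := by
    have hne : (Pi.single j 1 : Fin n → ℝ) ≠ 0 := by
      intro h
      have h' := congrFun h j
      rw [Pi.single_eq_same, Pi.zero_apply] at h'
      exact one_ne_zero h'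
    have := hG.dotProduct_mulVec_pos hne
    rw [star_trivial, single_dotProduct, mulVec_single] at this
    simpa using this
  have h1 := key 1
  have h2 := key (-1)
  push_cast at h1 h2
  rcases eq_or_lt_of_le hWjj with hW0 | hWpos
  · -- W j j = 0 : row j of V vanishes
    have hsum : ∑ l, V j l * V j l = 0 := by rw [← hWjjeq]; exact hW0.symm
    have hrow : ∀ l, V j l = 0 := by
      intro l
      exact mul_self_eq_zero.mp
        ((Finset.sum_eq_zero_iff_of_nonneg
          (fun l _ => mul_self_nonneg (V j l))).mp hsum l (Finset.mem_univ l))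
    have hw0 : (W.mulVec av) j = 0 := by
      rw [hWdef, mulVec, dotProduct]
      refine Finset.sum_eq_zero fun i _ => ?_
      rw [mul_apply]
      simp [hrow]
    have hgD : G j j = D j j := by rw [hGjj, ← hW0, sub_zero]
    have hd : 0 < D j j := hgD ▸ hg
    have hkey := key (-(a j))
    push_cast at hkey
    rw [hgD] at hkey
    have hc0 : c = D j j * (a j : ℝ) := by rw [hc, hw0, sub_zero]
    rw [hc0] at hkey
    have h4 : (a j : ℝ) * (a j : ℝ) ≤ 0 := by nlinarith
    have haj : (a j : ℝ) = 0 :=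
      mul_self_eq_zero.mp (le_antisymm h4 (mul_self_nonneg _))
    rw [hw0]
    constructor <;> rw [haj] <;> linarith
  · -- W j j > 0
    have hwv : (W.mulVec av) j = D j j * (a j : ℝ) - c := by rw [hc]; ring
    rw [hwv]
    constructor <;> linarith
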